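/- Let (μ_n) and μ be probability measures on ℝ with μ ≠ δ_0, let a_n, b_n be positive reals with T_{a_n} μ_n → μ weakly, and suppose that every subsequence of (T_{b_n} μ_n) has a further subsequence converging weakly to a probability measure on ℝ. Then the sequence (b_n/a_n) is bounded; moreover, whenever a subsequence T_{b_{n_k}} μ_{n_k} converges weakly to a probability measure ν, there is a further subsequence along which b_{n_k}/a_{n_k} converges to some c ∈ ℝ and ν = T_c μ. -/

import Mathlib

open MeasureTheory Filter Topology ENNReal BoundedContinuousFunction

noncomputable section

/-- `T_c μ`: pushforward of `μ` under `x ↦ c * x`. -/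
def rescale (c : ℝ) (μ : Measure ℝ) : Measure ℝ := μ.map (fun x => c * x)

/-- Scale mixture `μ ∘ ν`: pushforward of `μ × ν` under `(x, s) ↦ x * s`. -/
def mix (μ ν : Measure ℝ) : Measure ℝ := (μ.prod ν).map (fun p => p.1 * p.2)

/-- Convolution of two measures on `ℝ`. -/
def mconv (μ ν : Measure ℝ) : Measure ℝ := (μ.prod ν).map (fun p => p.1 + p.2)

/-- `n`-fold convolution power, with the convention that the 0th power is `δ_0`. -/
def convPow (μ : Measure ℝ) : ℕ → Measure ℝ
  | 0 => Measure.dirac 0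
  | n + 1 => mconv (convPow μ n) μ

/-- A probability measure `μ` on `ℝ` is weakly stable if for all `a b : ℝ` there is a
probability measure `lam` with `(T_a μ) ∗ (T_b μ) = μ ∘ lam`. -/
def WeaklyStable (μ : Measure ℝ) : Prop :=
  ∀ a b : ℝ, ∃ lam : Measure ℝ, IsProbabilityMeasure lam ∧
    mconv (rescale a μ) (rescale b μ) = mix μ lam

/-- `μ` is nontrivial: it has no atoms. -/
def NontrivialMeasure (μ : Measure ℝ) : Prop := ∀ x : ℝ, μ {x} = 0

/-- `μ` is symmetric: `T_{-1} μ = μ`. -/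
def SymmetricMeasure (μ : Measure ℝ) : Prop := rescale (-1) μ = μ

/-- `lam` is `μ`-weakly infinitely divisible: for every `n ≥ 1` there is a probability
measure `ν` concentrated on `[0, ∞)` with `(μ ∘ ν)^{∗ n} = μ ∘ lam`. -/
def MuWeaklyInfDiv (μ lam : Measure ℝ) : Prop :=
  ∀ n : ℕ, 1 ≤ n → ∃ ν : Measure ℝ, IsProbabilityMeasure ν ∧ ν (Set.Iio 0) = 0 ∧
    convPow (mix μ ν) n = mix μ lam

/-- Characteristic function of a measure on `ℝ`. -/
def charFun' (μ : Measure ℝ) (t : ℝ) : ℂ := ∫ x, Complex.exp (t * x * Complex.I) ∂μ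

/-- Weak convergence of a sequence of measures on `ℝ`. -/
def WeakTendsto (μs : ℕ → Measure ℝ) (μ : Measure ℝ) : Prop :=
  ∀ f : ℝ →ᵇ ℝ, Tendsto (fun n => ∫ x, f x ∂(μs n)) atTop (𝓝 (∫ x, f x ∂μ))

/-- A convolution semigroup family for `(μ, lam)`. -/
def ConvSemigroupFamily (μ lam : Measure ℝ) (L : ℝ → Measure ℝ) : Prop :=
  (∀ r : ℝ, 0 ≤ r → IsProbabilityMeasure (L r)) ∧
  L 0 = Measure.dirac 0 ∧ L 1 = lam ∧
  (∀ r s : ℝ, 0 ≤ r → 0 ≤ s → mconv (mix μ (L r)) (mix μ (L s)) = mix μ (L (r + s))) ∧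
  (∀ f : ℝ →ᵇ ℝ, Tendsto (fun r => ∫ x, f x ∂(L r)) (𝓝[>] (0 : ℝ)) (𝓝 (f 0)))

/-- `C_#`: bounded continuous functions vanishing on a neighborhood of `0`. -/
def CSharp (f : ℝ →ᵇ ℝ) : Prop := ∃ ε > (0 : ℝ), ∀ x : ℝ, |x| < ε → f x = 0

/-- `κ(μ) = sup {p ∈ [0,2] : ∫ |x|^p μ(dx) < ∞}` (with `sup ∅ = 0` in `ℝ`). -/
def kappa (μ : Measure ℝ) : ℝ :=
  sSup {p : ℝ | p ∈ Set.Icc (0 : ℝ) 2 ∧ ∫⁻ x, ENNReal.ofReal (|x| ^ p) ∂μ < ∞}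

section Helpers

lemma rescale_prob (c : ℝ) (μ : Measure ℝ) (h : IsProbabilityMeasure μ) :
    IsProbabilityMeasure (rescale c μ) := by
  haveI := h
  exact Measure.isProbabilityMeasure_map (measurable_const_mul c).aemeasurable

lemma rescale_rescale (c d : ℝ) (μ : Measure ℝ) :
    rescale c (rescale d μ) = rescale (c * d) μ := by
  rw [rescale, rescale, rescale,
    Measure.map_map (measurable_const_mul c) (measurable_const_mul d)]
  congr 1
  funext x
  simp [Function.comp, mul_assoc]

lemma integral_rescale (c : ℝ) (μ : Measure ℝ) (f : ℝ →ᵇ ℝ) :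
    ∫ x, f x ∂(rescale c μ) = ∫ x, f (c * x) ∂μ :=
  integral_map (measurable_const_mul c).aemeasurable
    f.continuous.measurable.aestronglyMeasurable

lemma weakTendsto_comp {ms : ℕ → Measure ℝ} {m : Measure ℝ} (h : WeakTendsto ms m)
    {ψ : ℕ → ℕ} (hψ : StrictMono ψ) : WeakTendsto (fun k => ms (ψ k)) m :=
  fun f => (h f).comp hψ.tendsto_atTop

def pm (m : Measure ℝ) (hm : IsProbabilityMeasure m) : ProbabilityMeasure ℝ := ⟨m, hm⟩

lemma weakTendsto_probTendsto {ms : ℕ → Measure ℝ} {m : Measure ℝ}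
    (hms : ∀ n, IsProbabilityMeasure (ms n)) (hm : IsProbabilityMeasure m)
    (h : WeakTendsto ms m) :
    Tendsto (fun n => pm (ms n) (hms n)) atTop (𝓝 (pm m hm)) :=
  ProbabilityMeasure.tendsto_iff_forall_integral_tendsto.2 (fun f => h f)

lemma weakTendsto_unique {ms : ℕ → Measure ℝ} (hms : ∀ n, IsProbabilityMeasure (ms n))
    {ν₁ ν₂ : Measure ℝ} (h1p : IsProbabilityMeasure ν₁) (h2p : IsProbabilityMeasure ν₂)
    (h1 : WeakTendsto ms ν₁) (h2 : WeakTendsto ms ν₂) : ν₁ = ν₂ := by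
  have t1 := weakTendsto_probTendsto hms h1p h1
  have t2 := weakTendsto_probTendsto hms h2p h2
  have := tendsto_nhds_unique t1 t2
  exact congrArg (fun p : ProbabilityMeasure ℝ => (p : Measure ℝ)) this

/-- Tail measure tends to zero. -/
lemma tendsto_tail (ν : Measure ℝ) (hν : IsProbabilityMeasure ν) :
    Tendsto (fun M : ℕ => ν {x : ℝ | (M : ℝ) ≤ |x|}) atTop (𝓝 0) := by
  haveI := hν
  have hms : ∀ M : ℕ, MeasurableSet {x : ℝ | (M : ℝ) ≤ |x|} := fun M =>
    (isClosed_le continuous_const continuous_abs).measurableSet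
  have h := tendsto_measure_iInter_atTop (μ := ν)
    (s := fun M : ℕ => {x : ℝ | (M : ℝ) ≤ |x|})
    (fun M => (hms M).nullMeasurableSet)
    (fun i j hij x hx => le_trans ((Nat.cast_le (α := ℝ)).2 hij) hx)
    ⟨0, measure_ne_top ν _⟩
  have hempty : ⋂ M : ℕ, {x : ℝ | (M : ℝ) ≤ |x|} = (∅ : Set ℝ) := by
    ext x
    simp only [Set.mem_iInter, Set.mem_setOf_eq, Set.mem_empty_iff_false, iff_false, not_forall,
      not_le]
    obtain ⟨n, hn⟩ := exists_nat_gt |x|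
    exact ⟨n, hn⟩
  rw [hempty, measure_empty] at h
  exact h

lemma rescale_tail_eq {d : ℝ} (hd : 0 < d) (μ : Measure ℝ) (A : ℝ) :
    (rescale d μ) {x : ℝ | A < |x|} = μ {x : ℝ | A / d < |x|} := by
  rw [rescale, Measure.map_apply (measurable_const_mul d)
    (isOpen_lt continuous_const continuous_abs).measurableSet]
  congr 1
  ext x
  simp only [Set.mem_preimage, Set.mem_setOf_eq, abs_mul, abs_of_pos hd]
  rw [div_lt_iff₀ hd, mul_comm]

lemma prob_eq_dirac_of_compl (μ : Measure ℝ) (hμ : IsProbabilityMeasure μ)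
    (h : μ {(0 : ℝ)}ᶜ = 0) : μ = Measure.dirac 0 := by
  haveI := hμ
  ext s hs
  rw [Measure.dirac_apply' _ hs]
  by_cases h0 : (0 : ℝ) ∈ s
  · rw [Set.indicator_of_mem h0]
    have hsc : μ sᶜ = 0 := by
      refine measure_mono_null ?_ h
      intro x hx
      simp only [Set.mem_compl_iff, Set.mem_singleton_iff] at *
      exact fun hx0 => hx (hx0 ▸ h0)
    simpa using (prob_compl_eq_zero_iff hs).1 hsc
  · rw [Set.indicator_of_notMem h0]
    refine measure_mono_null ?_ h
    intro x hx
    simp only [Set.mem_compl_iff, Set.mem_singleton_iff]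
    exact fun hx0 => h0 (hx0 ▸ hx)

end Helpers

lemma weakTendsto_rescale_of_tendsto (ρs : ℕ → Measure ℝ) (ρ : Measure ℝ)
    (hρs : ∀ n, IsProbabilityMeasure (ρs n)) (hρ : IsProbabilityMeasure ρ)
    (h : WeakTendsto ρs ρ) (c : ℕ → ℝ) (c0 : ℝ) (hc : Tendsto c atTop (𝓝 c0)) :
    WeakTendsto (fun n => rescale (c n) (ρs n)) (rescale c0 ρ) := by
  haveI := hρ
  intro f
  have hrw : (fun n => ∫ x, f x ∂(rescale (c n) (ρs n)))
      = fun n => ∫ x, f (c n * x) ∂(ρs n) := funext fun n => integral_rescale _ _ f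
  rw [hrw, integral_rescale]
  have hmain : Tendsto (fun n => ∫ x, f (c0 * x) ∂(ρs n)) atTop (𝓝 (∫ x, f (c0 * x) ∂ρ)) :=
    h (f.compContinuous ⟨fun x => c0 * x, continuous_const.mul continuous_id⟩)
  have hdiff : Tendsto
      (fun n => ∫ x, f (c n * x) ∂(ρs n) - ∫ x, f (c0 * x) ∂(ρs n)) atTop (𝓝 0) := by
    rw [NormedAddCommGroup.tendsto_nhds_zero]
    intro ε hε
    set B : ℝ := ‖f‖ + 1 with hB
    have hB0 : (0 : ℝ) < B := by positivity
    have hfB : ‖f‖ ≤ B - 1 := le_of_eq (by rw [hB]; ring)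
    -- choose tail cutoff M
    have hθpos : (0 : ℝ≥0∞) < ENNReal.ofReal (ε / (5 * B)) := by
      rw [ENNReal.ofReal_pos]; positivity
    obtain ⟨M0, hM0⟩ := ((tendsto_tail ρ hρ).eventually_lt_const hθpos).exists
    set M : ℝ := (M0 : ℝ) + 1 with hM
    have hMpos : (0 : ℝ) < M := by positivity
    set S : Set ℝ := {x : ℝ | M ≤ |x|} with hS
    have hSclosed : IsClosed S := isClosed_le continuous_const continuous_abs
    have hSsub : S ⊆ {x : ℝ | (M0 : ℝ) ≤ |x|} := by
      intro x hx
      have hx' : M ≤ |x| := hx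
      rw [hM] at hx'
      simp only [Set.mem_setOf_eq]
      linarith
    have hρS : ρ S < ENNReal.ofReal (ε / (5 * B)) :=
      lt_of_le_of_lt (measure_mono hSsub) hM0
    -- limsup of closed set measures
    have hts := weakTendsto_probTendsto hρs hρ h
    have hlimsup := ProbabilityMeasure.limsup_measure_closed_le_of_tendsto hts hSclosed
    have hev1 : ∀ᶠ n in atTop, ρs n S < ENNReal.ofReal (ε / (5 * B)) :=
      eventually_lt_of_limsup_lt (lt_of_le_of_lt hlimsup hρS)
    -- uniform continuity on compact set
    set R : ℝ := (|c0| + 1) * M with hR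
    have hK : UniformContinuousOn f (Set.Icc (-R) R) :=
      isCompact_Icc.uniformContinuousOn_of_continuous f.continuous.continuousOn
    obtain ⟨δ, hδ0, hδ⟩ := Metric.uniformContinuousOn_iff.1 hK (ε / 2) (by positivity)
    have hev2 : ∀ᶠ n in atTop, dist (c n) c0 < min (δ / M) 1 :=
      Metric.tendsto_nhds.mp hc _ (lt_min (by positivity) one_pos)
    filter_upwards [hev1, hev2] with n h1 h2
    haveI := hρs n
    have hint1 : Integrable (fun x => f (c n * x)) (ρs n) :=
      (f.compContinuous ⟨fun x => c n * x, continuous_const.mul continuous_id⟩).integrable _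
    have hint2 : Integrable (fun x => f (c0 * x)) (ρs n) :=
      (f.compContinuous ⟨fun x => c0 * x, continuous_const.mul continuous_id⟩).integrable _
    rw [← integral_sub hint1 hint2]
    have hcn_close : |c n - c0| < min (δ / M) 1 := by
      rwa [Real.dist_eq] at h2
    have hcn_bd : |c n| ≤ |c0| + 1 := by
      have := abs_sub_abs_le_abs_sub (c n) c0
      have h2' : |c n - c0| ≤ 1 := le_of_lt (lt_of_lt_of_le hcn_close (min_le_right _ _))
      linarith
    have hptwise : ∀ x : ℝ, ‖f (c n * x) - f (c0 * x)‖
        ≤ ε / 2 + (2 * B) * S.indicator (fun _ => (1 : ℝ)) x := by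
      intro x
      by_cases hx : x ∈ S
      · rw [Set.indicator_of_mem hx]
        have b1 : ‖f (c n * x)‖ ≤ ‖f‖ := f.norm_coe_le_norm _
        have b2 : ‖f (c0 * x)‖ ≤ ‖f‖ := f.norm_coe_le_norm _
        have := norm_sub_le (f (c n * x)) (f (c0 * x))
        have hε2 : (0 : ℝ) ≤ ε / 2 := by positivity
        nlinarith
      · rw [Set.indicator_of_notMem hx, mul_zero, add_zero]
        have hxM : |x| < M := by
          simp only [hS, Set.mem_setOf_eq, not_le] at hx
          exact hx
        have hxM' : |x| ≤ M := le_of_lt hxM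
        have hmem1 : c n * x ∈ Set.Icc (-R) R := by
          rw [Set.mem_Icc, ← abs_le, hR]
          calc |c n * x| = |c n| * |x| := abs_mul _ _
            _ ≤ (|c0| + 1) * M := by
                apply mul_le_mul hcn_bd hxM' (abs_nonneg x)
                positivity
        have hmem2 : c0 * x ∈ Set.Icc (-R) R := by
          rw [Set.mem_Icc, ← abs_le, hR]
          calc |c0 * x| = |c0| * |x| := abs_mul _ _
            _ ≤ (|c0| + 1) * M := by
                apply mul_le_mul (by linarith [abs_nonneg c0]) hxM' (abs_nonneg x)
                positivity
        have hdist : dist (c n * x) (c0 * x) < δ := by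
          rw [Real.dist_eq, ← sub_mul, abs_mul]
          calc |c n - c0| * |x| ≤ |c n - c0| * M :=
                mul_le_mul_of_nonneg_left hxM' (abs_nonneg _)
            _ < (δ / M) * M := by
                apply mul_lt_mul_of_pos_right _ hMpos
                exact lt_of_lt_of_le hcn_close (min_le_left _ _)
            _ = δ := div_mul_cancel₀ δ (ne_of_gt hMpos)
        have := hδ _ hmem1 _ hmem2 hdist
        rw [Real.dist_eq] at this
        exact le_of_lt this
    have hSmeas : MeasurableSet S := hSclosed.measurableSet
    have hintInd : Integrable (fun x => (2 * B) * S.indicator (fun _ => (1 : ℝ)) x) (ρs n) :=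
      (((integrable_const (1 : ℝ)).indicator hSmeas).const_mul (2 * B))
    have hintRHS : Integrable
        (fun x => ε / 2 + (2 * B) * S.indicator (fun _ => (1 : ℝ)) x) (ρs n) :=
      (integrable_const (ε / 2)).add hintInd
    calc ‖∫ x, (f (c n * x) - f (c0 * x)) ∂(ρs n)‖
        ≤ ∫ x, ‖f (c n * x) - f (c0 * x)‖ ∂(ρs n) := norm_integral_le_integral_norm _
      _ ≤ ∫ x, (ε / 2 + (2 * B) * S.indicator (fun _ => (1 : ℝ)) x) ∂(ρs n) :=
          integral_mono (hint1.sub hint2).norm hintRHS hptwise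
      _ = ε / 2 + (2 * B) * ((ρs n) S).toReal := by
          rw [integral_add (integrable_const _) hintInd, integral_const,
            integral_const_mul, integral_indicator_const _ hSmeas]
          simp [Measure.real]
      _ < ε := by
          have htr : ((ρs n) S).toReal < ε / (5 * B) := by
            have h1' : ((ρs n) S).toReal < (ENNReal.ofReal (ε / (5 * B))).toReal := by
              apply (ENNReal.toReal_lt_toReal (measure_ne_top _ _) ENNReal.ofReal_ne_top).2 h1
            rwa [ENNReal.toReal_ofReal (by positivity)] at h1'
          have h2B : (0 : ℝ) < 2 * B := by positivity
          have heq : 2 * B * (ε / (5 * B)) = 2 * ε / 5 := by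
            field_simp
          nlinarith
  have := hdiff.add hmain
  rw [zero_add] at this
  have heq : (fun n => (∫ x, f (c n * x) ∂(ρs n) - ∫ x, f (c0 * x) ∂(ρs n))
      + ∫ x, f (c0 * x) ∂(ρs n)) = fun n => ∫ x, f (c n * x) ∂(ρs n) := by
    funext n; ring
  rwa [heq] at this

theorem stmt1 (μs : ℕ → Measure ℝ) (μ : Measure ℝ)
    (hμs : ∀ n, IsProbabilityMeasure (μs n)) (hμ : IsProbabilityMeasure μ)
    (hne : μ ≠ Measure.dirac 0)
    (a b : ℕ → ℝ) (ha : ∀ n, 0 < a n) (hb : ∀ n, 0 < b n)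
    (hconv : WeakTendsto (fun n => rescale (a n) (μs n)) μ)
    (hcpt : ∀ φ : ℕ → ℕ, StrictMono φ → ∃ ψ : ℕ → ℕ, StrictMono ψ ∧
      ∃ ν : Measure ℝ, IsProbabilityMeasure ν ∧
        WeakTendsto (fun k => rescale (b (φ (ψ k))) (μs (φ (ψ k)))) ν) :
    (∃ C : ℝ, ∀ n, b n / a n ≤ C) ∧
    ∀ φ : ℕ → ℕ, StrictMono φ → ∀ ν : Measure ℝ, IsProbabilityMeasure ν →
      WeakTendsto (fun k => rescale (b (φ k)) (μs (φ k))) ν →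
      ∃ ψ : ℕ → ℕ, StrictMono ψ ∧ ∃ c : ℝ,
        Tendsto (fun k => b (φ (ψ k)) / a (φ (ψ k))) atTop (𝓝 c) ∧ ν = rescale c μ := by
  
  set c : ℕ → ℝ := fun n => b n / a n with hc_def
  have hcpos : ∀ n, 0 < c n := fun n => div_pos (hb n) (ha n)
  have hkey : ∀ n, rescale (c n) (rescale (a n) (μs n)) = rescale (b n) (μs n) := by
    intro n
    rw [rescale_rescale]
    congr 1
    simp only [hc_def]
    rw [div_mul_cancel₀ _ (ne_of_gt (ha n))]
  have hbdd : ∃ C : ℝ, ∀ n, c n ≤ C := by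
    by_contra hC
    push_neg at hC
    have hfreq : ∀ m : ℕ, ∃ᶠ k in atTop, (m : ℝ) < c k := by
      intro m
      rw [Filter.frequently_atTop]
      intro N
      obtain ⟨Cb, hCb⟩ : ∃ Cb : ℝ, ∀ k < N, c k ≤ Cb := by
        obtain ⟨Cb, hCb⟩ := ((Set.finite_Iio N).image c).bddAbove
        exact ⟨Cb, fun k hk => hCb (Set.mem_image_of_mem c hk)⟩
      obtain ⟨k, hk⟩ := hC (max (m : ℝ) Cb)
      refine ⟨k, ?_, lt_of_le_of_lt (le_max_left _ _) hk⟩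
      by_contra hkN
      push_neg at hkN
      exact absurd (hCb k hkN) (not_le.2 (lt_of_le_of_lt (le_max_right _ _) hk))
    obtain ⟨φ, hφ, hφc⟩ := Filter.extraction_forall_of_frequently hfreq
    obtain ⟨ψ, hψ, ν, hν, hWν⟩ := hcpt φ hφ
    have hηmono : StrictMono (fun k => φ (ψ k)) := hφ.comp hψ
    have hctop : Tendsto (fun k => c (φ (ψ k))) atTop atTop := by
      apply tendsto_atTop_mono (fun k => ?_) tendsto_natCast_atTop_atTop
      calc (k : ℝ) ≤ (ψ k : ℝ) := Nat.cast_le.2 hψ.le_apply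
        _ ≤ c (φ (ψ k)) := le_of_lt (hφc (ψ k))
    have hρprob : ∀ k, IsProbabilityMeasure (rescale (a (φ (ψ k))) (μs (φ (ψ k)))) :=
      fun k => rescale_prob _ _ (hμs _)
    have hTprob : ∀ k, IsProbabilityMeasure (rescale (b (φ (ψ k))) (μs (φ (ψ k)))) :=
      fun k => rescale_prob _ _ (hμs _)
    have hWμη : WeakTendsto (fun k => rescale (a (φ (ψ k))) (μs (φ (ψ k)))) μ :=
      weakTendsto_comp hconv hηmono
    have tρ := weakTendsto_probTendsto hρprob hμ hWμη
    have tT := weakTendsto_probTendsto hTprob hν hWν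
    have hU0 : ∀ ε : ℝ, 0 < ε → μ {x : ℝ | ε < |x|} = 0 := by
      intro ε hε
      have hUopen : IsOpen {x : ℝ | ε < |x|} := isOpen_lt continuous_const continuous_abs
      have h1 := ProbabilityMeasure.le_liminf_measure_open_of_tendsto tρ hUopen
      have h2 : ∀ M : ℕ, μ {x : ℝ | ε < |x|} ≤ ν {x : ℝ | (M : ℝ) ≤ |x|} := by
        intro M
        have hSclosed : IsClosed {x : ℝ | (M : ℝ) ≤ |x|} :=
          isClosed_le continuous_const continuous_abs
        have h3 := ProbabilityMeasure.limsup_measure_closed_le_of_tendsto tT hSclosed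
        have h4 : ∀ᶠ k in atTop,
            (rescale (a (φ (ψ k))) (μs (φ (ψ k)))) {x : ℝ | ε < |x|}
              ≤ (rescale (b (φ (ψ k))) (μs (φ (ψ k)))) {x : ℝ | (M : ℝ) ≤ |x|} := by
          have hev : ∀ᶠ k in atTop, (M : ℝ) / ε ≤ c (φ (ψ k)) :=
            hctop.eventually_ge_atTop _
          filter_upwards [hev] with k hk
          have e1 : (rescale (b (φ (ψ k))) (μs (φ (ψ k)))) {x : ℝ | c (φ (ψ k)) * ε < |x|}
              = (rescale (a (φ (ψ k))) (μs (φ (ψ k)))) {x : ℝ | ε < |x|} := by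
            rw [← hkey (φ (ψ k)), rescale_tail_eq (hcpos (φ (ψ k))),
              mul_div_cancel_left₀ ε (ne_of_gt (hcpos (φ (ψ k))))]
          rw [← e1]
          apply measure_mono
          intro x hx
          simp only [Set.mem_setOf_eq] at hx ⊢
          have hMle : (M : ℝ) ≤ c (φ (ψ k)) * ε := by
            have := mul_le_mul_of_nonneg_right hk (le_of_lt hε)
            rwa [div_mul_cancel₀ _ (ne_of_gt hε)] at this
          exact le_of_lt (lt_of_le_of_lt hMle hx)
        calc μ {x : ℝ | ε < |x|}
            ≤ atTop.liminf (fun k =>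
                (rescale (a (φ (ψ k))) (μs (φ (ψ k)))) {x : ℝ | ε < |x|}) := h1
          _ ≤ atTop.liminf (fun k =>
                (rescale (b (φ (ψ k))) (μs (φ (ψ k)))) {x : ℝ | (M : ℝ) ≤ |x|}) :=
              liminf_le_liminf h4
          _ ≤ atTop.limsup (fun k =>
                (rescale (b (φ (ψ k))) (μs (φ (ψ k)))) {x : ℝ | (M : ℝ) ≤ |x|}) :=
              liminf_le_limsup
          _ ≤ ν {x : ℝ | (M : ℝ) ≤ |x|} := h3
      exact le_antisymm
        (ge_of_tendsto (tendsto_tail ν hν) (Filter.Eventually.of_forall h2)) zero_le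
    have hcompl : μ {(0 : ℝ)}ᶜ = 0 := by
      have hsub : {(0 : ℝ)}ᶜ ⊆ ⋃ n : ℕ, {x : ℝ | 1 / ((n : ℝ) + 1) < |x|} := by
        intro x hx
        have hx0 : 0 < |x| := abs_pos.2 (by simpa using hx)
        obtain ⟨n, hn⟩ := exists_nat_one_div_lt hx0
        exact Set.mem_iUnion.2 ⟨n, hn⟩
      exact measure_mono_null hsub (measure_iUnion_null fun n => hU0 _ (by positivity))
    exact hne (prob_eq_dirac_of_compl μ hμ hcompl)
  refine ⟨hbdd, ?_⟩
  intro φ hφ ν hν hcν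
  obtain ⟨C, hC⟩ := hbdd
  have hmem : ∀ k, c (φ k) ∈ Set.Icc (0 : ℝ) C := fun k => ⟨(hcpos _).le, hC _⟩
  obtain ⟨c0, -, ψ, hψ, hten⟩ :=
    tendsto_subseq_of_bounded (Metric.isBounded_Icc (0 : ℝ) C) hmem
  have hten' : Tendsto (fun k => c (φ (ψ k))) atTop (𝓝 c0) := hten
  have hρprob : ∀ k, IsProbabilityMeasure (rescale (a (φ (ψ k))) (μs (φ (ψ k)))) :=
    fun k => rescale_prob _ _ (hμs _)
  have hW1 : WeakTendsto (fun k => rescale (a (φ (ψ k))) (μs (φ (ψ k)))) μ :=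
    weakTendsto_comp hconv (hφ.comp hψ)
  have hA := weakTendsto_rescale_of_tendsto _ μ hρprob hμ hW1 (fun k => c (φ (ψ k))) c0 hten'
  have hA' : WeakTendsto (fun k => rescale (b (φ (ψ k))) (μs (φ (ψ k)))) (rescale c0 μ) := by
    intro f
    have heq : (fun k => ∫ x, f x ∂(rescale (b (φ (ψ k))) (μs (φ (ψ k)))))
        = fun k => ∫ x, f x ∂(rescale (c (φ (ψ k))) (rescale (a (φ (ψ k))) (μs (φ (ψ k))))) := by
      funext k
      rw [hkey]
    rw [heq]
    exact hA f
  have hB : WeakTendsto (fun k => rescale (b (φ (ψ k))) (μs (φ (ψ k)))) ν :=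
    weakTendsto_comp hcν hψ
  exact ⟨ψ, hψ, c0, hten',
    weakTendsto_unique (fun k => rescale_prob _ _ (hμs _)) hν (rescale_prob c0 μ hμ) hB hA'⟩
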